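/- Suppose the finite data (x1,x0,u0) of length N satisfy the finite data-generation assumption for the true system (A_s,B_s) ∈ A(X)×L(U,X). Assume K ∈ K(X,U) satisfies Σ_is,A ⊆ Σ_{K,γ,A} for some γ ≥ γ₋, and let K₊ := K|_{X₊}. Then for every x ∈ X₊, the vector (x, K₊ x) ∈ X₊×U lies in the range of the operator ℂ^N → X₊×U, w ↦ (Ξ₀₊ w, Υ0 w). -/

import Mathlib

noncomputable section
open ContinuousLinearMap
open scoped ENNReal

/-- `A ∈ 𝒜(X)`: `A` leaves `Xm` invariant and the spectral radius of the
restriction `A|_{Xm}` is at most `γm`. -/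
def MemAX {X : Type} [NormedAddCommGroup X] [InnerProductSpace ℂ X]
    (Xm : Submodule ℂ X) (γm : ℝ) (A : X →L[ℂ] X) : Prop :=
  ∃ Am : Xm →L[ℂ] Xm, (∀ x : Xm, (Am x : X) = A (x : X)) ∧
    spectralRadius ℂ Am ≤ ENNReal.ofReal γm

theorem stmt_12
    {X : Type} [NormedAddCommGroup X] [InnerProductSpace ℂ X] [CompleteSpace X] [Nontrivial X]
    {U : Type} [NormedAddCommGroup U] [InnerProductSpace ℂ U] [CompleteSpace U] [Nontrivial U]
    (Xp Xm : Submodule ℂ X) (hXp : IsClosed (Xp : Set X)) (hXm : IsClosed (Xm : Set X))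
    (hinf : Xp ⊓ Xm = ⊥) (hsup : Xp ⊔ Xm = ⊤) [FiniteDimensional ℂ Xp]
    (γm : ℝ) (hγm0 : 0 < γm) (hγm1 : γm < 1)
    -- Π̃ : the projection onto X₊ along X₋, with codomain X₊
    (Pt : X →L[ℂ] Xp) (hPp : ∀ x ∈ Xp, (Pt x : X) = x) (hPm : ∀ x ∈ Xm, Pt x = 0)
    (N : ℕ) (x1 x0 : Fin N → X) (u0 : Fin N → U)
    (As : X →L[ℂ] X) (Bs : U →L[ℂ] X) (hAs : MemAX Xm γm As)
    (hgen : ∀ k : Fin N, x1 k = As (x0 k) + Bs (u0 k))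
    -- K ∈ 𝒦(X,U) with Σ_is,𝒜 ⊆ Σ_{K,γ,𝒜} for some γ ≥ γ₋
    (K : X →L[ℂ] U) (hK : ∀ x ∈ Xm, K x = 0)
    (γ : ℝ) (hγ : γm ≤ γ)
    (hsub : ∀ (A : X →L[ℂ] X) (B : U →L[ℂ] X),
      MemAX Xm γm A → (∀ k : Fin N, x1 k = A (x0 k) + B (u0 k)) →
      ∃ M : ℝ, 1 ≤ M ∧ ∀ k : ℕ, ‖(A + B.comp K) ^ k‖ ≤ M * γ ^ k) :
    -- conclusion: (x, K₊ x) ∈ Ran [Ξ₀₊ ; Υ₀] for every x ∈ X₊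
    ∀ x : Xp, ∃ w : Fin N → ℂ,
      (∑ k : Fin N, w k • Pt (x0 k)) = x ∧ (∑ k : Fin N, w k • u0 k) = K (x : X) := by
  intro x
  classical
  set v : Fin N → Xp × U := fun k => (Pt (x0 k), u0 k) with hv
  set e : Xp × U := (x, K (x : X)) with he
  by_cases hmem : e ∈ Submodule.span ℂ (Set.range v)
  · obtain ⟨w, hw⟩ := (Submodule.mem_span_range_iff_exists_fun ℂ).1 hmem
    refine ⟨w, ?_, ?_⟩
    · have h1 := congrArg Prod.fst hw
      simpa [hv, he, Prod.fst_sum] using h1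
    · have h2 := congrArg Prod.snd hw
      simpa [hv, he, Prod.snd_sum] using h2
  · exfalso
    set V : Submodule ℂ (Xp × U) := Submodule.span ℂ (Set.range v) with hV
    set p : Submodule ℂ (Xp × U) := V ⊔ Submodule.span ℂ {e} with hp
    haveI : FiniteDimensional ℂ V := FiniteDimensional.span_of_finite ℂ (Set.finite_range v)
    haveI : FiniteDimensional ℂ (Submodule.span ℂ ({e} : Set (Xp × U))) :=
      FiniteDimensional.span_of_finite ℂ (Set.finite_singleton e)
    haveI : FiniteDimensional ℂ p := Submodule.finiteDimensional_sup V _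
    have hep : e ∈ p := Submodule.mem_sup_right (Submodule.mem_span_singleton_self e)
    set eP : p := ⟨e, hep⟩ with heP
    have hePV : eP ∉ V.comap p.subtype := by
      intro hcon
      exact hmem hcon
    obtain ⟨ψ, hψe, hψV⟩ := (V.comap p.subtype).exists_dual_map_eq_bot_of_notMem hePV inferInstance
    set ψL : p →L[ℂ] ℂ := LinearMap.toContinuousLinearMap ψ with hψL
    obtain ⟨Φ, hΦ, -⟩ := exists_extension_norm_eq p ψL
    have hvp : ∀ k, v k ∈ p := fun k =>
      Submodule.mem_sup_left (Submodule.subset_span (Set.mem_range_self k))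
    have hΦe : Φ e ≠ 0 := by
      have : Φ e = ψ eP := hΦ eP
      rw [this]; exact hψe
    have hΦv : ∀ k, Φ (v k) = 0 := by
      intro k
      have h1 : Φ (v k) = ψ ⟨v k, hvp k⟩ := hΦ ⟨v k, hvp k⟩
      have h2 : (⟨v k, hvp k⟩ : p) ∈ V.comap p.subtype := by
        simp only [Submodule.mem_comap, Submodule.subtype_apply]
        exact Submodule.subset_span (Set.mem_range_self k)
      have h3 : ψ ⟨v k, hvp k⟩ ∈ (V.comap p.subtype).map ψ :=
        Submodule.mem_map_of_mem h2
      rw [hψV] at h3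
      rw [h1]; exact h3
    -- functionals on X and U
    set F : X →L[ℂ] ℂ := (Φ.comp (inl ℂ Xp U)).comp Pt with hF
    set G : U →L[ℂ] ℂ := Φ.comp (inr ℂ Xp U) with hG
    have hΦsplit : ∀ (a : Xp) (b : U), Φ (a, b) = Φ (inl ℂ Xp U a) + Φ (inr ℂ Xp U b) := by
      intro a b
      rw [← map_add]
      congr 1
      simp
    set xh : X := (x : X) with hxh
    have hPtx : Pt xh = x := Subtype.ext (hPp xh x.2)
    set c : ℂ := F xh + G (K xh) with hc
    have hce : c = Φ e := by
      rw [hc, hF, hG, he]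
      simp only [comp_apply, hPtx]
      rw [← hΦsplit]
    have hc0 : c ≠ 0 := by rw [hce]; exact hΦe
    set T : X →L[ℂ] X := As + Bs.comp K with hT
    set vv : X := c⁻¹ • ((((γ : ℂ) + 1) • xh) - T xh) with hvv
    set A' : X →L[ℂ] X := As + F.smulRight vv with hA'
    set B' : U →L[ℂ] X := Bs + G.smulRight vv with hB'
    have hA'mem : MemAX Xm γm A' := by
      obtain ⟨Am, hAm, hAmr⟩ := hAs
      refine ⟨Am, fun z => ?_, hAmr⟩
      have hFz : F (z : X) = 0 := by
        rw [hF]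
        simp only [comp_apply]
        rw [hPm (z : X) z.2]
        simp
        exact map_zero Φ
      rw [hA']
      simp only [add_apply, smulRight_apply, hFz, zero_smul, add_zero]
      exact hAm z
    have hgen' : ∀ k : Fin N, x1 k = A' (x0 k) + B' (u0 k) := by
      intro k
      have hzero : F (x0 k) + G (u0 k) = 0 := by
        have := hΦv k
        rw [hv] at this
        simp only at this
        rw [hF, hG]
        simp only [comp_apply]
        rw [← hΦsplit, this]
      rw [hA', hB']
      simp only [add_apply, smulRight_apply]
      rw [hgen k]
      have : F (x0 k) • vv + G (u0 k) • vv = (F (x0 k) + G (u0 k)) • vv := (add_smul _ _ _).symm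
      rw [show As (x0 k) + F (x0 k) • vv + (Bs (u0 k) + G (u0 k) • vv)
            = As (x0 k) + Bs (u0 k) + (F (x0 k) • vv + G (u0 k) • vv) by abel,
          this, hzero, zero_smul, add_zero]
    obtain ⟨M, hM1, hbd⟩ := hsub A' B' hA'mem hgen'
    set S : X →L[ℂ] X := A' + B'.comp K with hS
    have hSx : S xh = ((γ : ℂ) + 1) • xh := by
      have h1 : S xh = T xh + c • vv := by
        rw [hS, hA', hB', hT, hc]
        simp only [add_apply, comp_apply, smulRight_apply, add_smul]
        abel
      rw [h1, hvv, smul_smul, mul_inv_cancel₀ hc0, one_smul]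
      abel
    have hx0 : xh ≠ 0 := by
      intro hx0
      apply hmem
      have hx' : x = 0 := Subtype.ext hx0
      rw [he, hx', hx0]
      simp only [map_zero]
      exact Submodule.zero_mem _
    have hpow : ∀ k : ℕ, (S ^ k) xh = (((γ : ℂ) + 1) ^ k) • xh := by
      intro k
      induction k with
      | zero => simp
      | succ n ih =>
        rw [pow_succ', ContinuousLinearMap.mul_apply, ih, map_smul, hSx, smul_smul, ← pow_succ]
    have hγ0 : (0 : ℝ) < γ := lt_of_lt_of_le hγm0 hγ
    have hnorm : ∀ k : ℕ, (γ + 1) ^ k ≤ M * γ ^ k := by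
      intro k
      have h1 : ‖(S ^ k) xh‖ ≤ M * γ ^ k * ‖xh‖ := by
        calc ‖(S ^ k) xh‖ ≤ ‖S ^ k‖ * ‖xh‖ := le_opNorm _ _
          _ ≤ M * γ ^ k * ‖xh‖ :=
            mul_le_mul_of_nonneg_right (hbd k) (norm_nonneg _)
      have h2 : ‖(S ^ k) xh‖ = (γ + 1) ^ k * ‖xh‖ := by
        rw [hpow k, norm_smul, norm_pow]
        congr 2
        have h3 : ((γ : ℂ) + 1) = ((γ + 1 : ℝ) : ℂ) := by push_cast; ring
        rw [h3, Complex.norm_real]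
        exact Real.norm_of_nonneg (by linarith)
      rw [h2] at h1
      have hxpos : 0 < ‖xh‖ := norm_pos_iff.2 hx0
      exact le_of_mul_le_mul_right h1 hxpos
    have hone : (1 : ℝ) < (γ + 1) / γ := (one_lt_div hγ0).2 (lt_add_one γ)
    obtain ⟨n, hn⟩ := pow_unbounded_of_one_lt M hone
    have := hnorm n
    rw [div_pow] at hn
    have hγn : (0 : ℝ) < γ ^ n := pow_pos hγ0 n
    rw [lt_div_iff₀ hγn] at hn
    linarith
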